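/- Let S_n = ∑_{i ≥ 0, n-4i ≥ 1} F_{n-4i} (with S_0 = 0), let φ = (1+√5)/2, and suppose f assigns to each positive integer N a far-difference representation f(N) = (P_N, Q_N) of N. Then, as n → ∞, the difference between the average number of positive summands and the average number of negative summands over integers in (S_{n-1}, S_n], namely (1/(S_n - S_{n-1}))·∑_{N=S_{n-1}+1}^{S_n} (|P_N| - |Q_N|), converges to φ/2. -/

import Mathlib

open Filter

/-- The golden mean `φ = (1+√5)/2`. -/
noncomputable def phi : ℝ := (1 + Real.sqrt 5) / 2

/-- `F n` is the `n`-th Fibonacci number in the paper's indexing: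
`F 1 = 1, F 2 = 2, F 3 = 3, F 4 = 5`, i.e. `F n = fib (n+1)`. -/
def F (n : ℕ) : ℕ := Nat.fib (n + 1)

/-- `S n = F_n + F_{n-4} + F_{n-8} + ⋯` (sum over `i ≥ 0` with `n - 4i ≥ 1`),
with `S 0 = 0`. -/
def S (n : ℕ) : ℕ := ∑ i ∈ Finset.range ((n + 3) / 4), F (n - 4 * i)

/-- `(P, Q)` is a far-difference representation of the integer `N`. -/
def IsFarDifference (N : ℤ) (P Q : Finset ℕ) : Prop :=
  (∀ i ∈ P, 0 < i) ∧ (∀ j ∈ Q, 0 < j) ∧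
  (∀ i ∈ P, ∀ j ∈ P, i < j → i + 4 ≤ j) ∧
  (∀ i ∈ Q, ∀ j ∈ Q, i < j → i + 4 ≤ j) ∧
  (∀ i ∈ P, ∀ j ∈ Q, i + 3 ≤ j ∨ j + 3 ≤ i) ∧
  N = (∑ i ∈ P, (F i : ℤ)) - ∑ j ∈ Q, (F j : ℤ)

open goldenRatio Real

lemma S_add_four (n : ℕ) : S (n + 4) = F (n + 4) + S n := by
  unfold S
  have h : (n + 4 + 3) / 4 = (n + 3) / 4 + 1 := by omega
  rw [h, Finset.sum_range_succ']
  have : ∀ i, n + 4 - 4 * (i + 1) = n - 4 * i := by intro i; omega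
  simp [this]; ring

lemma F_add_two' (a b c : ℕ) (h1 : b = a + 1) (h2 : c = a + 2) :
    F c = F b + F a := by
  subst h1 h2; simp [F, Nat.fib_add_two]; ring

lemma F_eq (n : ℕ) : F (n + 4) = S (n + 3) + S (n + 1) + 1 := by
  induction n using Nat.strong_induction_on with
  | _ n ih =>
    match n with
    | 0 => decide
    | 1 => decide
    | 2 => decide
    | 3 => decide
    | (m + 4) =>
      have h1 := ih m (by omega)
      have h2 : S (m + 7) = F (m + 7) + S (m + 3) := by
        have := S_add_four (m + 3); rw [show m+3+4 = m+7 by omega] at this; exact this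
      have h3 : S (m + 5) = F (m + 5) + S (m + 1) := by
        have := S_add_four (m + 1); rw [show m+1+4 = m+5 by omega] at this; exact this
      have h4 : F (m + 8) = F (m + 7) + F (m + 6) := F_add_two' (m+6) _ _ rfl rfl
      have h5 : F (m + 7) = F (m + 6) + F (m + 5) := F_add_two' (m+5) _ _ rfl rfl
      have h6 : F (m + 6) = F (m + 5) + F (m + 4) := F_add_two' (m+4) _ _ rfl rfl
      show F (m + 8) = S (m + 7) + S (m + 5) + 1
      omega

lemma S_master (n : ℕ) : S (n + 4) = S (n + 3) + S (n + 1) + S n + 1 := by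
  have := S_add_four n; have := F_eq n; omega

lemma S_lt_succ (n : ℕ) : S n < S (n + 1) := by
  match n with
  | 0 => decide
  | 1 => decide
  | 2 => decide
  | (m + 3) =>
    have := S_master m
    show S (m + 3) < S (m + 4)
    omega

lemma S_mono : Monotone S := monotone_nat_of_le_succ (fun n => (S_lt_succ n).le)

lemma S_strictMono : StrictMono S := strictMono_nat_of_lt_succ S_lt_succ

lemma S_eq_F_add (t : ℕ) (ht : 1 ≤ t) : S t = F t + S (t - 4) := by
  match t with
  | 1 => decide
  | 2 => decide
  | 3 => decide
  | (m + 4) => simpa using S_add_four m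

lemma F_eq' (n : ℕ) (hn : 1 ≤ n) : F n = S (n - 1) + S (n - 3) + 1 := by
  match n with
  | 1 => decide
  | 2 => decide
  | 3 => decide
  | (m + 4) => simpa using F_eq m

lemma S_ge_self (n : ℕ) : n ≤ S n := by
  induction n with
  | zero => simp [S]
  | succ m ih => have := S_lt_succ m; omega

lemma F_pos (n : ℕ) : 0 < F n := Nat.fib_pos.mpr (by omega)

/-- sum of F over a gap-4 set bounded by a is at most S a -/
lemma sum_F_le (a : ℕ) : ∀ (P : Finset ℕ), (∀ i ∈ P, 0 < i) → (∀ i ∈ P, i ≤ a) →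
    (∀ i ∈ P, ∀ j ∈ P, i < j → i + 4 ≤ j) → ∑ i ∈ P, F i ≤ S a := by
  induction a using Nat.strong_induction_on with
  | _ a ih =>
    intro P hpos hle hgap
    rcases P.eq_empty_or_nonempty with rfl | hne
    · simp
    · set t := P.max' hne with ht
      have htP : t ∈ P := P.max'_mem hne
      have hta : t ≤ a := hle t htP
      have ht1 : 1 ≤ t := hpos t htP
      have hsub : ∑ i ∈ P, F i = F t + ∑ i ∈ P.erase t, F i := by
        rw [← Finset.add_sum_erase P _ htP]
      have herase : ∀ i ∈ P.erase t, i ≤ t - 4 := by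
        intro i hi
        have hiP := Finset.mem_of_mem_erase hi
        have hit : i ≠ t := Finset.ne_of_mem_erase hi
        have : i ≤ t := P.le_max' i hiP
        have := hgap i hiP t htP (lt_of_le_of_ne this hit)
        omega
      have hrec : ∑ i ∈ P.erase t, F i ≤ S (t - 4) := by
        apply ih (t - 4) (by omega) _
          (fun i hi => hpos i (Finset.mem_of_mem_erase hi)) herase
          (fun i hi j hj hij => hgap i (Finset.mem_of_mem_erase hi) j
            (Finset.mem_of_mem_erase hj) hij)
      calc ∑ i ∈ P, F i ≤ F t + S (t - 4) := by omega
        _ = S t := (S_eq_F_add t ht1).symm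
        _ ≤ S a := S_mono hta

lemma fd_swap {N : ℤ} {P Q : Finset ℕ} (h : IsFarDifference N P Q) :
    IsFarDifference (-N) Q P := by
  obtain ⟨h1, h2, h3, h4, h5, h6⟩ := h
  exact ⟨h2, h1, h4, h3, fun i hi j hj => (h5 j hj i hi).symm, by omega⟩

/-- bounds when the max element is in P -/
lemma fd_bounds {N : ℤ} {P Q : Finset ℕ} (h : IsFarDifference N P Q)
    {n : ℕ} (hn : n ∈ P) (hmaxP : ∀ i ∈ P, i ≤ n) (hmaxQ : ∀ j ∈ Q, j ≤ n) :
    (S (n - 1) : ℤ) < N ∧ N ≤ (S n : ℤ) := by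
  obtain ⟨h1, h2, h3, h4, h5, h6⟩ := h
  have hn1 : 1 ≤ n := h1 n hn
  -- Q elements are ≤ n - 3
  have hQ3 : ∀ j ∈ Q, j ≤ n - 3 := by
    intro j hj
    have := h5 n hn j hj
    have := hmaxQ j hj
    omega
  have hQle : ∑ j ∈ Q, F j ≤ S (n - 3) := sum_F_le _ Q h2 hQ3 h4
  have hPle : ∑ i ∈ P, F i ≤ S n := sum_F_le _ P h1 hmaxP h3
  -- lower bound: sum over P ≥ F n
  have hPge : (F n : ℤ) ≤ ∑ i ∈ P, (F i : ℤ) := by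
    have := Finset.sum_le_sum_of_subset_of_nonneg
      (Finset.singleton_subset_iff.mpr hn)
      (fun i _ _ => by positivity : ∀ i ∈ P, i ∉ ({n} : Finset ℕ) → (0:ℤ) ≤ F i)
    simpa using this
  have hFn := F_eq' n hn1
  have hQle' : (∑ j ∈ Q, (F j : ℤ)) ≤ (S (n-3) : ℤ) := by exact_mod_cast hQle
  have hPle' : (∑ i ∈ P, (F i : ℤ)) ≤ (S n : ℤ) := by exact_mod_cast hPle
  have hQ0 : (0:ℤ) ≤ ∑ j ∈ Q, (F j : ℤ) := Finset.sum_nonneg (fun j _ => by positivity)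
  constructor
  · have : (F n : ℤ) = (S (n-1) : ℤ) + (S (n-3) : ℤ) + 1 := by exact_mod_cast hFn
    omega
  · omega

lemma fd_max_mem_P {N : ℤ} {P Q : Finset ℕ} (h : IsFarDifference N P Q) (hN : 0 < N) :
    ∃ n, n ∈ P ∧ (∀ i ∈ P, i ≤ n) ∧ (∀ j ∈ Q, j ≤ n) := by
  have hne : (P ∪ Q).Nonempty := by
    rcases Finset.eq_empty_or_nonempty (P ∪ Q) with he | hne
    · exfalso
      have hP : P = ∅ := Finset.union_eq_empty.mp he |>.1
      have hQ : Q = ∅ := Finset.union_eq_empty.mp he |>.2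
      rw [hP, hQ] at h
      simp [IsFarDifference] at h
      omega
    · exact hne
  set n := (P ∪ Q).max' hne with hn
  have hmem := (P ∪ Q).max'_mem hne
  have hmaxP : ∀ i ∈ P, i ≤ n := fun i hi => (P ∪ Q).le_max' i (Finset.mem_union_left _ hi)
  have hmaxQ : ∀ j ∈ Q, j ≤ n := fun j hj => (P ∪ Q).le_max' j (Finset.mem_union_right _ hj)
  rcases Finset.mem_union.mp hmem with hP | hQ
  · exact ⟨n, hP, hmaxP, hmaxQ⟩
  · exfalso
    have := fd_bounds (fd_swap h) hQ hmaxQ hmaxP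
    have : (0:ℤ) ≤ (S (n-1) : ℤ) := by positivity
    omega

lemma fd_zero {P Q : Finset ℕ} (h : IsFarDifference 0 P Q) : P = ∅ ∧ Q = ∅ := by
  rcases Finset.eq_empty_or_nonempty (P ∪ Q) with he | hne
  · exact ⟨Finset.union_eq_empty.mp he |>.1, Finset.union_eq_empty.mp he |>.2⟩
  · exfalso
    set n := (P ∪ Q).max' hne with hn
    have hmem := (P ∪ Q).max'_mem hne
    have hmaxP : ∀ i ∈ P, i ≤ n := fun i hi => (P ∪ Q).le_max' i (Finset.mem_union_left _ hi)
    have hmaxQ : ∀ j ∈ Q, j ≤ n := fun j hj => (P ∪ Q).le_max' j (Finset.mem_union_right _ hj)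
    rcases Finset.mem_union.mp hmem with hP | hQ
    · have := fd_bounds h hP hmaxP hmaxQ
      have : (0:ℤ) ≤ (S (n-1) : ℤ) := by positivity
      omega
    · have := fd_bounds (fd_swap h) hQ hmaxQ hmaxP
      have : (0:ℤ) ≤ (S (n-1) : ℤ) := by positivity
      simp at this
      omega

lemma fd_erase {N : ℤ} {P Q : Finset ℕ} (h : IsFarDifference N P Q)
    {n : ℕ} (hn : n ∈ P) :
    IsFarDifference (N - F n) (P.erase n) Q := by
  obtain ⟨h1, h2, h3, h4, h5, h6⟩ := h
  refine ⟨fun i hi => h1 i (Finset.mem_of_mem_erase hi), h2,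
    fun i hi j hj => h3 i (Finset.mem_of_mem_erase hi) j (Finset.mem_of_mem_erase hj),
    h4, fun i hi => h5 i (Finset.mem_of_mem_erase hi), ?_⟩
  have : (∑ i ∈ P, (F i : ℤ)) = F n + ∑ i ∈ P.erase n, (F i : ℤ) :=
    (Finset.add_sum_erase P _ hn).symm
  omega

lemma exists_le_S (N : ℕ) : ∃ m, N ≤ S m := ⟨N, S_ge_self N⟩

/-- least index n with N ≤ S n -/
def idx (N : ℕ) : ℕ := Nat.find (exists_le_S N)

lemma le_S_idx (N : ℕ) : N ≤ S (idx N) := Nat.find_spec (exists_le_S N)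

lemma idx_le {N m : ℕ} (h : N ≤ S m) : idx N ≤ m := Nat.find_le h

lemma S_lt_of_lt_idx {N m : ℕ} (h : m < idx N) : S m < N := by
  have := Nat.find_min (exists_le_S N) h
  omega

lemma idx_pos {N : ℕ} (h : 0 < N) : 0 < idx N := by
  rcases Nat.eq_zero_or_pos (idx N) with h0 | h1
  · have h2 := le_S_idx N
    have hS0 : S 0 = 0 := rfl
    rw [h0] at h2
    omega
  · exact h1

lemma idx_eq {N n : ℕ} (h1 : S n < N) (h2 : N ≤ S (n + 1)) : idx N = n + 1 := by
  have ha : idx N ≤ n + 1 := idx_le h2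
  rcases Nat.lt_or_ge (idx N) (n+1) with hb | hb
  · have := le_S_idx N
    have := S_mono (show idx N ≤ n by omega)
    omega
  · omega

lemma F_lt_twice {N : ℕ} (h : 0 < N) : F (idx N) < 2 * N := by
  have h1 : 1 ≤ idx N := idx_pos h
  have h2 : S (idx N - 1) < N := S_lt_of_lt_idx (by omega)
  have h3 := F_eq' (idx N) h1
  have h4 : S (idx N - 3) ≤ S (idx N - 1) := S_mono (by omega)
  omega

def g : ℕ → ℤ
  | 0 => 0
  | (N + 1) =>
    if F (idx (N + 1)) ≤ N + 1 then 1 + g (N + 1 - F (idx (N + 1)))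
    else 1 - g (F (idx (N + 1)) - (N + 1))
decreasing_by
  · have := F_pos (idx (N+1)); omega
  · have := F_lt_twice (show 0 < N + 1 by omega); omega

lemma g_zero : g 0 = 0 := by simp [g]

lemma g_eq (N : ℕ) (h : 0 < N) :
    g N = if F (idx N) ≤ N then 1 + g (N - F (idx N)) else 1 - g (F (idx N) - N) := by
  match N with
  | (M + 1) => rw [g]

lemma card_eq_g : ∀ N : ℕ, 0 < N → ∀ P Q : Finset ℕ, IsFarDifference (N : ℤ) P Q →
    (P.card : ℤ) - Q.card = g N := by
  intro N
  induction N using Nat.strong_induction_on with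
  | _ N ih =>
    intro hN P Q hPQ
    obtain ⟨n, hnP, hmaxP, hmaxQ⟩ := fd_max_mem_P hPQ (by exact_mod_cast hN)
    obtain ⟨hl, hu⟩ := fd_bounds hPQ hnP hmaxP hmaxQ
    have hn1 : 1 ≤ n := hPQ.1 n hnP
    have hlN : S (n - 1) < N := by exact_mod_cast hl
    have huN : N ≤ S n := by exact_mod_cast hu
    have hidx : idx N = n := by
      have := idx_eq (N := N) (n := n - 1) hlN (by rwa [show n - 1 + 1 = n by omega])
      omega
    have herase := fd_erase hPQ hnP
    have hcardP : P.card = (P.erase n).card + 1 := by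
      rw [Finset.card_erase_of_mem hnP]
      have : 1 ≤ P.card := Finset.card_pos.mpr ⟨n, hnP⟩
      omega
    rcases lt_trichotomy (F n) N with hFN | hFN | hFN
    · -- F n < N
      set M := N - F n with hM
      have hM0 : 0 < M := by omega
      have hMN : M < N := by have := F_pos n; omega
      have hMZ : (M : ℤ) = (N : ℤ) - F n := by push_cast [hM]; omega
      have hrep : IsFarDifference (M : ℤ) (P.erase n) Q := by rwa [hMZ]
      have := ih M hMN hM0 _ _ hrep
      rw [g_eq N hN, hidx, if_pos (le_of_lt hFN), ← hM]
      omega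
    · -- F n = N
      have h0 : ((N : ℤ) - F n) = 0 := by omega
      rw [h0] at herase
      obtain ⟨hPe, hQe⟩ := fd_zero herase
      have : Q.card = 0 := by rw [hQe]; simp
      have : (P.erase n).card = 0 := by rw [hPe]; simp
      rw [g_eq N hN, hidx, if_pos (le_of_eq hFN), show N - F n = 0 by omega, g_zero]
      omega
    · -- N < F n
      set M := F n - N with hM
      have hM0 : 0 < M := by omega
      have hMN : M < N := by
        have := F_lt_twice hN
        rw [hidx] at this
        omega
      have hMZ : (M : ℤ) = -((N : ℤ) - F n) := by push_cast [hM]; omega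
      have hrep : IsFarDifference (M : ℤ) Q (P.erase n) := by
        rw [hMZ]; exact fd_swap herase
      have := ih M hMN hM0 _ _ hrep
      rw [g_eq N hN, hidx, if_neg (by omega), ← hM]
      omega

/-- sum of g over the block (S n, S (n+1)] -/
def Tn (n : ℕ) : ℤ := ∑ N ∈ Finset.Ioc (S n) (S (n + 1)), g N

/-- cumulative sum of g up to S m -/
def Cc (m : ℕ) : ℤ := ∑ N ∈ Finset.Ioc 0 (S m), g N

lemma Cc_succ (m : ℕ) : Cc (m + 1) = Cc m + Tn m := by
  unfold Cc Tn
  rw [← Finset.sum_Ioc_consecutive _ (Nat.zero_le (S m)) (S_mono (Nat.le_succ m))]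

lemma sum_Ioc_reflect (h : ℕ → ℤ) (a b : ℕ) (hab : a ≤ b) :
    ∑ N ∈ Finset.Ioc a b, h (b - N) = ∑ M ∈ Finset.range (b - a), h M := by
  apply Finset.sum_nbij' (fun N => b - N) (fun M => b - M)
  · intro N hN; simp only [Finset.mem_Ioc] at hN; simp only [Finset.mem_range]; omega
  · intro M hM; simp only [Finset.mem_range] at hM; simp only [Finset.mem_Ioc]; omega
  · intro N hN; simp only [Finset.mem_Ioc] at hN; omega
  · intro M hM; simp only [Finset.mem_range] at hM; omega
  · intro N hN; rfl

lemma sum_Ioc_shift (h : ℕ → ℤ) (b c : ℕ) (hbc : b ≤ c) :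
    ∑ N ∈ Finset.Ioc b c, h (N - b) = ∑ M ∈ Finset.Ioc 0 (c - b), h M := by
  apply Finset.sum_nbij' (fun N => N - b) (fun M => M + b)
  · intro N hN; simp only [Finset.mem_Ioc] at hN; simp only [Finset.mem_Ioc]; omega
  · intro M hM; simp only [Finset.mem_Ioc] at hM; simp only [Finset.mem_Ioc]; omega
  · intro N hN; simp only [Finset.mem_Ioc] at hN; omega
  · intro M hM; simp only [Finset.mem_Ioc] at hM; omega
  · intro N hN; rfl

lemma g_block {n N : ℕ} (h1 : S n < N) (h2 : N ≤ S (n + 1)) :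
    g N = if F (n + 1) ≤ N then 1 + g (N - F (n + 1)) else 1 - g (F (n + 1) - N) := by
  rw [g_eq N (by omega), idx_eq h1 h2]

lemma Tn_rec (n : ℕ) : Tn (n + 3) = (S (n + 1) : ℤ) + (S n : ℤ) + 1 - Tn n := by
  have hF : F (n + 4) = S (n + 3) + S (n + 1) + 1 := F_eq n
  have hS4 : S (n + 4) = F (n + 4) + S n := S_add_four n
  have hlow : S (n + 3) ≤ F (n + 4) := by omega
  have hhigh : F (n + 4) ≤ S (n + 4) := by omega
  unfold Tn
  rw [show n + 3 + 1 = n + 4 by omega]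
  rw [← Finset.sum_Ioc_consecutive _ hlow hhigh]
  -- lower part: N ∈ Ioc (S (n+3)) (F (n+4)) : g N = 1 - g (F (n+4) - N)
  have e1 : ∑ N ∈ Finset.Ioc (S (n + 3)) (F (n + 4)), g N
      = ∑ N ∈ Finset.Ioc (S (n + 3)) (F (n + 4)), (1 - g (F (n + 4) - N)) := by
    apply Finset.sum_congr rfl
    intro N hN
    simp only [Finset.mem_Ioc] at hN
    have := g_block (n := n + 3) hN.1 (by rw [show n+3+1 = n+4 by omega]; omega)
    rw [show n + 3 + 1 = n + 4 by omega] at this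
    rw [this]
    rcases Nat.lt_or_ge N (F (n + 4)) with h | h
    · rw [if_neg (by omega)]
    · have hNF : N = F (n + 4) := by omega
      rw [if_pos (by omega), hNF]
      simp [g_zero]
  -- upper part
  have e2 : ∑ N ∈ Finset.Ioc (F (n + 4)) (S (n + 4)), g N
      = ∑ N ∈ Finset.Ioc (F (n + 4)) (S (n + 4)), (1 + g (N - F (n + 4))) := by
    apply Finset.sum_congr rfl
    intro N hN
    simp only [Finset.mem_Ioc] at hN
    have hx1 : S (n + 3) < N := by omega
    have hx2 : N ≤ S (n + 3 + 1) := by rw [show n+3+1 = n+4 by omega]; omega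
    have := g_block (n := n + 3) hx1 hx2
    rw [show n + 3 + 1 = n + 4 by omega] at this
    rw [this, if_pos (by omega)]
  rw [e1, e2]
  rw [Finset.sum_sub_distrib, Finset.sum_add_distrib]
  rw [sum_Ioc_reflect g _ _ hlow, sum_Ioc_shift g _ _ hhigh]
  have hc1 : (Finset.Ioc (S (n + 3)) (F (n + 4))).card = S (n + 1) + 1 := by
    rw [Nat.card_Ioc]; omega
  have hc2 : (Finset.Ioc (F (n + 4)) (S (n + 4))).card = S n := by
    rw [Nat.card_Ioc]; omega
  have hr1 : F (n + 4) - S (n + 3) = S (n + 1) + 1 := by omega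
  have hr2 : S (n + 4) - F (n + 4) = S n := by omega
  rw [hr1, hr2]
  have hrange : ∑ M ∈ Finset.range (S (n + 1) + 1), g M = Cc n + Tn n := by
    have hins : Finset.range (S (n + 1) + 1) = insert 0 (Finset.Ioc 0 (S (n + 1))) := by
      ext x
      simp only [Finset.mem_range, Finset.mem_insert, Finset.mem_Ioc]
      omega
    rw [hins, Finset.sum_insert (by simp), g_zero, zero_add]
    have : (∑ M ∈ Finset.Ioc 0 (S (n + 1)), g M) = Cc (n + 1) := rfl
    rw [this, Cc_succ]
  have hion : (∑ M ∈ Finset.Ioc 0 (S n), g M) = Cc n := rfl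
  rw [hrange, hion, Finset.sum_const, Finset.sum_const, hc1, hc2]
  have hTn : (∑ x ∈ Finset.Ioc (S n) (S (n + 1)), g x) = Tn n := rfl
  rw [hTn]
  ring


lemma g_one : g 1 = 1 := by
  have hidx : idx 1 = 1 := by
    have := idx_eq (N := 1) (n := 0) (by decide) (by decide)
    omega
  rw [g_eq 1 (by norm_num), hidx]
  norm_num [show F 1 = 1 by decide, g_zero]

lemma g_two : g 2 = 1 := by
  have hidx : idx 2 = 2 := by
    have := idx_eq (N := 2) (n := 1) (by decide) (by decide)
    omega
  rw [g_eq 2 (by norm_num), hidx]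
  norm_num [show F 2 = 2 by decide, g_zero]

lemma g_three : g 3 = 1 := by
  have hidx : idx 3 = 3 := by
    have := idx_eq (N := 3) (n := 2) (by decide) (by decide)
    omega
  rw [g_eq 3 (by norm_num), hidx]
  norm_num [show F 3 = 3 by decide, g_zero]

/-- `ZA n = S (n+1) - S n`, the size of block n+1. -/
def ZA (n : ℕ) : ℤ := (S (n + 1) : ℤ) - (S n : ℤ)

lemma ZA_pos (n : ℕ) : 1 ≤ ZA n := by have := S_lt_succ n; unfold ZA; omega

lemma ZA_rec (n : ℕ) : ZA (n + 4) = ZA (n + 3) + ZA (n + 1) + ZA n := by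
  have h1 := S_master (n + 1)
  have h2 := S_master n
  unfold ZA
  rw [show n+1+4 = n+5 by omega, show n+1+3 = n+4 by omega, show n+1+1 = n+2 by omega] at h1
  rw [show n+4+1 = n+5 by omega, show n+3+1 = n+4 by omega, show n+1+1 = n+2 by omega]
  omega

lemma S_vals : S 0 = 0 ∧ S 1 = 1 ∧ S 2 = 2 ∧ S 3 = 3 ∧ S 4 = 5 := by decide

lemma ZA_vals : ZA 0 = 1 ∧ ZA 1 = 1 ∧ ZA 2 = 1 ∧ ZA 3 = 2 := by decide

lemma Tn_vals : Tn 0 = 1 ∧ Tn 1 = 1 ∧ Tn 2 = 1 ∧ Tn 3 = 1 := by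
  obtain ⟨s0, s1, s2, s3, s4⟩ := S_vals
  have t0 : Tn 0 = 1 := by
    unfold Tn; rw [s0, s1, show Finset.Ioc 0 1 = {1} from rfl]
    simp [g_one]
  have t1 : Tn 1 = 1 := by
    unfold Tn; rw [s1, s2, show Finset.Ioc 1 2 = {2} from rfl]
    simp [g_two]
  have t2 : Tn 2 = 1 := by
    unfold Tn; rw [s2, s3, show Finset.Ioc 2 3 = {3} from rfl]
    simp [g_three]
  have t3 : Tn 3 = 1 := by
    have h := Tn_rec 0
    norm_num [s0, s1] at h
    omega
  exact ⟨t0, t1, t2, t3⟩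

lemma Tn_eq_ZA (n : ℕ) : Tn (n + 3) = ZA (n + 3) - Tn n := by
  have h := Tn_rec n
  have h2 := S_master n
  unfold ZA
  rw [show n+3+1 = n+4 by omega]
  omega

lemma Tn_err : ∀ n, |2 * Tn (n + 1) - ZA (n + 1) - ZA n| ≤ 1 := by
  intro n
  induction n using Nat.strong_induction_on with
  | _ n ih =>
    match n with
    | 0 => obtain ⟨t0,t1,t2,t3⟩ := Tn_vals; obtain ⟨z0,z1,z2,z3⟩ := ZA_vals
           rw [t1, z1, z0]; norm_num
    | 1 => obtain ⟨t0,t1,t2,t3⟩ := Tn_vals; obtain ⟨z0,z1,z2,z3⟩ := ZA_vals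
           rw [t2, z2, z1]; norm_num
    | 2 => obtain ⟨t0,t1,t2,t3⟩ := Tn_vals; obtain ⟨z0,z1,z2,z3⟩ := ZA_vals
           rw [t3, z3, z2]; norm_num
    | (m + 3) =>
      have ihm := ih m (by omega)
      have hT : Tn (m + 4) = ZA (m + 4) - Tn (m + 1) := by
        have := Tn_eq_ZA (m + 1)
        rw [show m+1+3 = m+4 by omega] at this; exact this
      have hZ := ZA_rec m
      rw [show m+3+1 = m+4 by omega]
      rw [abs_le] at *
      omega

lemma two_ZA_ge (n : ℕ) : (n : ℤ) ≤ 2 * ZA n := by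
  induction n using Nat.strong_induction_on with
  | _ n ih =>
    match n with
    | 0 => obtain ⟨z0,z1,z2,z3⟩ := ZA_vals; omega
    | 1 => obtain ⟨z0,z1,z2,z3⟩ := ZA_vals; omega
    | 2 => obtain ⟨z0,z1,z2,z3⟩ := ZA_vals; omega
    | 3 => obtain ⟨z0,z1,z2,z3⟩ := ZA_vals; omega
    | (m + 4) =>
      have h1 := ih (m + 3) (by omega)
      have h2 := ih (m + 1) (by omega)
      have h3 := ih m (by omega)
      have := ZA_rec m
      have := ZA_pos m
      push_cast at *
      omega

lemma ZA_cf : ∀ k : ℕ, ZA (2 * k) = (Nat.fib (k + 1) : ℤ) ^ 2 ∧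
    ZA (2 * k + 1) = (Nat.fib (k + 1) : ℤ) * (Nat.fib (k + 2) : ℤ) := by
  intro k
  induction k using Nat.strong_induction_on with
  | _ k ih =>
    match k with
    | 0 => obtain ⟨z0,z1,z2,z3⟩ := ZA_vals; constructor <;> simp [z0, z1]
    | 1 => obtain ⟨z0,z1,z2,z3⟩ := ZA_vals
           constructor
           · show ZA 2 = _; rw [z2]; norm_num
           · show ZA 3 = _; rw [z3]; norm_num
    | (j + 2) =>
      obtain ⟨ih1a, ih1b⟩ := ih (j + 1) (by omega)
      obtain ⟨ih0a, ih0b⟩ := ih j (by omega)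
      have f3 : (Nat.fib (j + 3) : ℤ) = Nat.fib (j + 1) + Nat.fib (j + 2) := by
        have := Nat.fib_add_two (n := j + 1)
        rw [show j+1+2 = j+3 by omega, show j+1+1 = j+2 by omega] at this
        exact_mod_cast this
      have f4 : (Nat.fib (j + 4) : ℤ) = Nat.fib (j + 2) + Nat.fib (j + 3) := by
        have := Nat.fib_add_two (n := j + 2)
        rw [show j+2+2 = j+4 by omega, show j+2+1 = j+3 by omega] at this
        exact_mod_cast this
      rw [show 2*(j+1)+1 = 2*j+3 by omega, show (j+1)+1 = j+2 by omega,
          show (j+1)+2 = j+3 by omega] at ih1b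
      rw [show 2*(j+1) = 2*j+2 by omega, show j+1+1 = j+2 by omega] at ih1a
      have ha : ZA (2 * j + 4) = ZA (2 * j + 3) + ZA (2 * j + 1) + ZA (2 * j) := ZA_rec (2 * j)
      have hb : ZA (2 * j + 5) = ZA (2 * j + 4) + ZA (2 * j + 2) + ZA (2 * j + 1) := by
        have := ZA_rec (2 * j + 1)
        rw [show 2*j+1+4 = 2*j+5 by omega, show 2*j+1+3 = 2*j+4 by omega,
            show 2*j+1+1 = 2*j+2 by omega] at this
        exact this
      have goal1 : ZA (2 * j + 4) = (Nat.fib (j + 3) : ℤ) ^ 2 := by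
        rw [ha, ih1b, ih0b, ih0a, f3]
        ring
      constructor
      · rw [show 2*(j+2) = 2*j+4 by omega, show (j+2)+1 = j+3 by omega]
        exact goal1
      · rw [show 2*(j+2)+1 = 2*j+5 by omega, show (j+2)+1 = j+3 by omega,
            show (j+2)+2 = j+4 by omega]
        rw [hb, goal1, ih1a, ih0b, f4, f3]
        ring

lemma fib_one_le (j : ℕ) : (1 : ℝ) ≤ (Nat.fib (j + 1) : ℝ) := by
  exact_mod_cast Nat.one_le_iff_ne_zero.mpr (Nat.fib_pos.mpr (by omega)).ne'

lemma abs_goldConj_lt_one : |ψ| < 1 := by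
  rw [abs_lt]
  exact ⟨neg_one_lt_goldenConj, by linarith [goldenConj_neg]⟩

lemma c_tendsto :
    Tendsto (fun j : ℕ => ψ ^ (j + 1) / (Nat.fib (j + 1) : ℝ)) atTop (nhds 0) := by
  have hpow : Tendsto (fun j : ℕ => |ψ| ^ (j + 1)) atTop (nhds 0) := by
    have h : Tendsto (fun n : ℕ => |ψ| ^ n) atTop (nhds 0) :=
      tendsto_pow_atTop_nhds_zero_of_lt_one (abs_nonneg _) abs_goldConj_lt_one
    exact h.comp (tendsto_add_atTop_nat 1)
  apply squeeze_zero_norm _ hpow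
  intro j
  rw [Real.norm_eq_abs, abs_div, abs_pow,
    abs_of_nonneg (by positivity : (0:ℝ) ≤ (Nat.fib (j+1) : ℝ))]
  exact div_le_self (by positivity) (fib_one_le j)

lemma fib_ratio_tendsto :
    Tendsto (fun j : ℕ => (Nat.fib (j + 1) : ℝ) / (Nat.fib (j + 2) : ℝ)) atTop (nhds φ⁻¹) := by
  have hφc : Tendsto (fun j : ℕ => φ + ψ ^ (j + 1) / (Nat.fib (j + 1) : ℝ)) atTop (nhds φ) := by
    simpa using tendsto_const_nhds.add c_tendsto
  have hinv := hφc.inv₀ goldenRatio_ne_zero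
  apply hinv.congr
  intro j
  have hfg : (Nat.fib (j + 2) : ℝ) = φ * Nat.fib (j + 1) + ψ ^ (j + 1) := by
    have h := fib_succ_sub_goldenRatio_mul_fib (j + 1)
    rw [show j + 1 + 1 = j + 2 by omega] at h
    linarith
  have hf1 : (Nat.fib (j + 1) : ℝ) ≠ 0 := by linarith [fib_one_le j]
  have hf2' : (0:ℝ) < (Nat.fib (j + 2) : ℝ) := by
    have := fib_one_le (j + 1)
    rw [show j + 1 + 1 = j + 2 by omega] at this
    linarith
  set a : ℝ := φ with ha
  set b : ℝ := ψ with hb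
  have hne : a * (Nat.fib (j+1):ℝ) + b ^ (j+1) ≠ 0 := by rw [← hfg]; exact hf2'.ne'
  rw [eq_div_iff hf2'.ne', hfg]
  field_simp

noncomputable def w (k : ℕ) : ℝ := (ZA (k - 1) : ℝ) / (ZA k : ℝ)

lemma w_eq (k : ℕ) (hk : 1 ≤ k) :
    w k = (Nat.fib ((k - 1) / 2 + 1) : ℝ) / (Nat.fib ((k - 1) / 2 + 2) : ℝ) := by
  obtain ⟨m, rfl⟩ : ∃ m, k = m + 1 := ⟨k - 1, by omega⟩
  rcases Nat.even_or_odd m with ⟨j, hj⟩ | ⟨j, hj⟩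
  · -- m = 2j : w (2j+1) = ZA (2j) / ZA (2j+1)
    subst hj
    have h1 := (ZA_cf j).1
    have h2 := (ZA_cf j).2
    unfold w
    rw [show j + j + 1 - 1 = 2 * j by omega, show j + j + 1 = 2 * j + 1 by omega,
        show (2 : ℕ) * j / 2 = j by omega]
    rw [h1, h2]
    have hf1 : ((Nat.fib (j + 1) : ℤ) : ℝ) ≠ 0 := by
      push_cast; linarith [fib_one_le j]
    push_cast
    rw [pow_two, mul_div_mul_left _ _ (by exact_mod_cast hf1)]
  · -- m = 2j+1 : w (2j+2) = ZA (2j+1) / ZA (2j+2)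
    subst hj
    have h2 := (ZA_cf j).2
    have h3 := (ZA_cf (j + 1)).1
    rw [show 2 * (j + 1) = 2 * j + 2 by omega, show j + 1 + 1 = j + 2 by omega] at h3
    unfold w
    rw [show 2 * j + 1 + 1 - 1 = 2 * j + 1 by omega, show 2 * j + 1 + 1 = 2 * j + 2 by omega,
        show ((2 : ℕ) * j + 1) / 2 = j by omega]
    rw [h2, h3]
    have hf2 : ((Nat.fib (j + 2) : ℤ) : ℝ) ≠ 0 := by
      push_cast
      have := fib_one_le (j + 1)
      rw [show j + 1 + 1 = j + 2 by omega] at this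
      linarith
    push_cast
    rw [pow_two, mul_div_mul_right _ _ (by exact_mod_cast hf2)]

lemma w_tendsto : Tendsto w atTop (nhds φ⁻¹) := by
  have hq : Tendsto (fun k : ℕ => (k - 1) / 2) atTop atTop := by
    apply tendsto_atTop_atTop.mpr
    intro b
    exact ⟨2 * b + 1, fun k hk => by omega⟩
  have := fib_ratio_tendsto.comp hq
  apply this.congr'
  filter_upwards [eventually_ge_atTop 1] with k hk
  exact (w_eq k hk).symm

lemma ZA_real_pos (n : ℕ) : (0 : ℝ) < (ZA n : ℝ) := by
  have := ZA_pos n; exact_mod_cast (by omega : (0:ℤ) < ZA n)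

lemma u_tendsto : Tendsto (fun m : ℕ => (Tn m : ℝ) / (ZA m : ℝ)) atTop (nhds (φ / 2)) := by
  set err : ℕ → ℝ := fun m => ((2 * Tn m - ZA m - ZA (m - 1) : ℤ) : ℝ) / (2 * (ZA m : ℝ))
    with herr
  have key : ∀ m : ℕ, 1 ≤ m →
      (Tn m : ℝ) / (ZA m : ℝ) = 1 / 2 + w m / 2 + err m := by
    intro m hm
    have hZ : (ZA m : ℝ) ≠ 0 := (ZA_real_pos m).ne'
    unfold w
    rw [herr]
    push_cast
    field_simp
    ring
  have herr0 : Tendsto err atTop (nhds 0) := by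
    apply squeeze_zero_norm' _ tendsto_one_div_atTop_nhds_zero_nat
    filter_upwards [eventually_ge_atTop 1] with m hm
    obtain ⟨l, rfl⟩ : ∃ l, m = l + 1 := ⟨m - 1, by omega⟩
    have he := Tn_err l
    rw [herr]
    have hZp := ZA_real_pos (l + 1)
    have h2Z : ((l + 1 : ℕ) : ℝ) ≤ 2 * (ZA (l + 1) : ℝ) := by
      exact_mod_cast two_ZA_ge (l + 1)
    rw [Real.norm_eq_abs, abs_div, abs_of_nonneg (by positivity : (0:ℝ) ≤ 2 * (ZA (l+1):ℝ))]
    have habs : |((2 * Tn (l+1) - ZA (l+1) - ZA (l+1-1) : ℤ) : ℝ)| ≤ 1 := by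
      rw [show l + 1 - 1 = l by omega]
      rw [← Int.cast_abs]
      exact_mod_cast he
    have hm1 : (0:ℝ) < ((l+1 : ℕ):ℝ) := by positivity
    calc |((2 * Tn (l+1) - ZA (l+1) - ZA (l+1-1) : ℤ) : ℝ)| / (2 * (ZA (l+1):ℝ))
        ≤ 1 / (2 * (ZA (l+1):ℝ)) := by
          apply div_le_div_of_nonneg_right habs (by positivity) |>.trans_eq rfl
      _ ≤ 1 / ((l+1 : ℕ):ℝ) := by
          apply one_div_le_one_div_of_le hm1 h2Z
  have hlim : Tendsto (fun m => 1 / 2 + w m / 2 + err m) atTop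
      (nhds (1 / 2 + φ⁻¹ / 2 + 0)) := by
    exact ((tendsto_const_nhds.add (w_tendsto.div_const 2)).add herr0)
  have hval : 1 / 2 + φ⁻¹ / 2 + 0 = φ / 2 := by
    have h1 : φ⁻¹ = -ψ := inv_goldenRatio
    have h2 : 1 - φ = ψ := one_sub_goldenConj
    rw [h1, ← h2]
    ring
  rw [hval] at hlim
  apply hlim.congr'
  filter_upwards [eventually_ge_atTop 1] with m hm
  exact (key m hm).symm


/-- The average of (number of positive summands minus number of negative
summands) in far-difference representations of integers in `(S_{n-1}, S_n]`
converges to `φ/2`. -/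

theorem far_difference_mean_difference
    (f : ℕ → Finset ℕ × Finset ℕ)
    (hf : ∀ N : ℕ, 0 < N → IsFarDifference (N : ℤ) (f N).1 (f N).2) :
    Tendsto (fun n : ℕ =>
        (∑ N ∈ Finset.Icc (S (n - 1) + 1) (S n),
            (((f N).1.card : ℝ) - ((f N).2.card : ℝ))) /
          ((S n : ℝ) - (S (n - 1) : ℝ)))
      atTop (nhds (phi / 2)) := by
  have hphi : phi / 2 = goldenRatio / 2 := rfl
  rw [hphi, ← Filter.tendsto_add_atTop_iff_nat 1]
  apply u_tendsto.congr
  intro n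
  show (Tn n : ℝ) / (ZA n : ℝ) =
      (∑ N ∈ Finset.Icc (S (n + 1 - 1) + 1) (S (n + 1)),
        (((f N).1.card : ℝ) - ((f N).2.card : ℝ))) /
      ((S (n + 1) : ℝ) - (S (n + 1 - 1) : ℝ))
  have hnum : (∑ N ∈ Finset.Icc (S (n + 1 - 1) + 1) (S (n + 1)),
      (((f N).1.card : ℝ) - ((f N).2.card : ℝ))) = (Tn n : ℝ) := by
    rw [show n + 1 - 1 = n from rfl, Finset.Icc_add_one_left_eq_Ioc]
    unfold Tn
    push_cast
    apply Finset.sum_congr rfl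
    intro N hN
    simp only [Finset.mem_Ioc] at hN
    have hpos : 0 < N := lt_of_le_of_lt (Nat.zero_le _) hN.1
    have h := card_eq_g N hpos (f N).1 (f N).2 (hf N hpos)
    exact_mod_cast congrArg (fun z : ℤ => (z : ℝ)) h
  have hden : ((S (n + 1) : ℝ) - (S (n + 1 - 1) : ℝ)) = (ZA n : ℝ) := by
    rw [show n + 1 - 1 = n from rfl]
    unfold ZA
    push_cast
    ring
  rw [hnum, hden]
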